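/- For any partition λ of n and positive integer m, the Schur function specialization satisfies s_λ(1^m) = ∏_{r ∈ λ} (m + cont(r)) / h(r), where the product is over boxes r of the Young diagram of λ, cont((i,j)) = j − i is the content, and h(r) is the hook length. -/

import Mathlib

/-- The hook length of the box `(i, j)` of a Young diagram: the number of boxes directly
to the right, plus the number directly below, plus one. -/
def hookLength (μ : YoungDiagram) (i j : ℕ) : ℕ :=
  μ.rowLen i + μ.colLen j - i - j - 1


open Finset

namespace HookContent

/-- Entries of an SSYT are at least the row index. -/
theorem le_entry {μ : YoungDiagram} (T : SemistandardYoungTableau μ) {i j : ℕ}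
    (h : (i, j) ∈ μ) : i ≤ T i j := by
  induction i with
  | zero => exact Nat.zero_le _
  | succ n ih =>
    have hn : (n, j) ∈ μ := μ.up_left_mem (Nat.le_succ n) le_rfl h
    exact Nat.succ_le_of_lt (lt_of_le_of_lt (ih hn) (T.col_strict (Nat.lt_succ_self n) h))

instance bddFinite (μ : YoungDiagram) (m : ℕ) :
    Finite {T : SemistandardYoungTableau μ // ∀ i j : ℕ, (i, j) ∈ μ → T i j < m} := by
  let f : {T : SemistandardYoungTableau μ // ∀ i j : ℕ, (i, j) ∈ μ → T i j < m} →
      (μ.cells → Fin m) := fun T c => ⟨T.1 c.1.1 c.1.2, T.2 c.1.1 c.1.2 (μ.mem_cells _ |>.mp c.2)⟩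
  have hf : Function.Injective f := by
    intro T T' h
    ext i j
    by_cases hc : (i, j) ∈ μ
    · have := congrFun h ⟨(i, j), (μ.mem_cells _).mpr hc⟩
      simpa [f] using this
    · rw [T.1.zeros hc, T'.1.zeros hc]
  exact Finite.of_injective f hf

theorem nat_card_eq_sum_fibers {X : Type*} [Finite X] {β : Type*} [DecidableEq β]
    (φ : X → β) (s : Finset β) (h : ∀ x, φ x ∈ s) :
    Nat.card X = ∑ t ∈ s, Nat.card {x : X // φ x = t} := by
  classical
  have := Fintype.ofFinite X
  rw [Nat.card_eq_fintype_card]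
  rw [← Finset.card_univ, Finset.card_eq_sum_card_fiberwise (fun x _ => h x)]
  refine Finset.sum_congr rfl fun t _ => ?_
  rw [Nat.card_eq_fintype_card, Fintype.card_subtype]

end HookContent

open Finset Polynomial

namespace HookContent

theorem desc_eval_succ_sub (j : ℕ) (x : ℚ) :
    (descPochhammer ℚ (j + 1)).eval (x + 1) - (descPochhammer ℚ (j + 1)).eval x
      = (j + 1) * (descPochhammer ℚ j).eval x := by
  have h1 : (descPochhammer ℚ (j + 1)).eval (x + 1) = (x + 1) * (descPochhammer ℚ j).eval x := by
    rw [descPochhammer_succ_left]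
    simp [eval_comp]
  have h2 := descPochhammer_succ_eval j x
  rw [h1, h2]
  ring

theorem sum_Ico_desc (j u v : ℕ) (huv : u ≤ v) :
    ∑ x ∈ Finset.Ico u v, (descPochhammer ℚ j).eval (x : ℚ)
      = ((descPochhammer ℚ (j + 1)).eval (v : ℚ)
          - (descPochhammer ℚ (j + 1)).eval (u : ℚ)) / (j + 1) := by
  induction v, huv using Nat.le_induction with
  | base => simp
  | succ v hv ih =>
    rw [Finset.sum_Ico_succ_top hv, ih]
    have h := desc_eval_succ_sub j (v : ℚ)
    have hj : ((j : ℚ) + 1) ≠ 0 := by positivity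
    push_cast
    field_simp
    linarith [h]

theorem det_piFinset_sum {m : ℕ} (s : Fin m → Finset ℕ) (g : Fin m → ℕ → Fin m → ℚ) :
    ∑ b ∈ Fintype.piFinset s, Matrix.det (Matrix.of fun i j => g i (b i) j)
      = Matrix.det (Matrix.of fun i j => ∑ x ∈ s i, g i x j) := by
  classical
  have heq : (Matrix.of fun i j => ∑ x ∈ s i, g i x j) = (fun i => ∑ x ∈ s i, g i x) := by
    ext i j
    simp
  rw [heq]
  have := (Matrix.detRowAlternating (n := Fin m) (R := ℚ)).toMultilinearMap.map_sum_finset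
    (g := fun i x => g i x) (A := s)
  rw [eq_comm]
  exact this

end HookContent

open Finset Polynomial

namespace HookContent

theorem prod_inv_eq_factorial_inv (m : ℕ) :
    (∏ j : Fin (m + 1), if j = 0 then (1 : ℚ) else (j : ℚ)⁻¹) = ((Nat.factorial m : ℚ))⁻¹ := by
  induction m with
  | zero => simp
  | succ n ih =>
    rw [Fin.prod_univ_castSucc]
    have hcast : ∀ j : Fin (n+1),
        ((if (j.castSucc : Fin (n+2)) = 0 then (1:ℚ) else ((j.castSucc : Fin (n+2)) : ℚ)⁻¹))
        = (if j = 0 then 1 else (j : ℚ)⁻¹) := by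
      intro j
      by_cases h : j = 0 <;> simp [h, Fin.castSucc_eq_zero_iff]
    rw [Finset.prod_congr rfl (fun j _ => hcast j), ih]
    have hne : (Fin.last (n+1) : Fin (n+2)) ≠ 0 := by
      simp [Fin.ext_iff]
    have hlast : ((Fin.last (n+1) : Fin (n+2)) : ℚ) = (n+1 : ℚ) := by simp
    rw [if_neg hne, hlast, Nat.factorial_succ]
    push_cast
    rw [mul_inv]
    ring

/-- The big matrix `B`. -/
noncomputable def Bmat (m : ℕ) (A : Fin (m + 1) → ℕ) : Matrix (Fin (m + 1)) (Fin (m + 1)) ℚ :=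
  Matrix.of fun i j => (if j = 0 then 1 else (j : ℚ)⁻¹) * (descPochhammer ℚ j).eval (A i : ℚ)

theorem det_Bmat (m : ℕ) (A : Fin (m + 1) → ℕ) :
    (Bmat m A).det = ((Nat.factorial m : ℚ))⁻¹ * (Matrix.vandermonde fun i => (A i : ℚ)).det := by
  rw [Bmat]
  rw [Matrix.det_mul_row (fun j : Fin (m+1) => if j = 0 then (1:ℚ) else ((j : ℕ) : ℚ)⁻¹)
    (fun i j => (descPochhammer ℚ (j : ℕ)).eval ((A i : ℚ)))]
  have h1 : (Matrix.of fun (i j : Fin (m+1)) => (descPochhammer ℚ (j : ℕ)).eval ((A i : ℚ))).det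
      = (Matrix.vandermonde fun i => (A i : ℚ)).det := by
    rw [Matrix.det_eval_matrixOfPolynomials_eq_det_vandermonde (fun i => (A i : ℚ))
      (fun j => descPochhammer ℚ (j : ℕ)) (fun i => descPochhammer_natDegree (R := ℚ) i)
      (fun i => monic_descPochhammer ℚ _)]
  have h1' : (Matrix.det fun (i j : Fin (m+1)) => (descPochhammer ℚ (j : ℕ)).eval ((A i : ℚ)))
      = (Matrix.vandermonde fun i => (A i : ℚ)).det := h1
  rw [h1']
  rw [prod_inv_eq_factorial_inv]

/-- The difference matrix `D`. -/
def Dmat (m : ℕ) : Matrix (Fin (m + 1)) (Fin (m + 1)) ℚ :=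
  Matrix.of fun i k => if k = i then 1 else if (k : ℕ) = (i : ℕ) + 1 then -1 else 0

theorem det_Dmat (m : ℕ) : (Dmat m).det = 1 := by
  have h : (Dmat m).BlockTriangular id := by
    intro i j hij
    simp only [id] at hij
    have h1 : j ≠ i := ne_of_lt hij
    have h2 : (j : ℕ) ≠ (i : ℕ) + 1 := by omega
    simp [Dmat, h1, h2]
  rw [Matrix.det_of_upperTriangular h]
  simp [Dmat]

theorem DB_apply (m : ℕ) (A : Fin (m + 1) → ℕ) (i j : Fin (m + 1)) :
    (Dmat m * Bmat m A) i j
      = if h : (i : ℕ) < m then Bmat m A i j - Bmat m A ⟨(i : ℕ) + 1, by omega⟩ j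
        else Bmat m A i j := by
  rw [Matrix.mul_apply]
  by_cases h : (i : ℕ) < m
  · rw [dif_pos h]
    set i1 : Fin (m+1) := ⟨(i : ℕ) + 1, by omega⟩ with hi1
    have hne : i1 ≠ i := by simp [hi1, Fin.ext_iff]
    have key : ∀ k : Fin (m+1), Dmat m i k * Bmat m A k j
        = (if k = i then Bmat m A i j else 0) + (if k = i1 then -(Bmat m A i1 j) else 0) := by
      intro k
      by_cases h1 : k = i
      · subst h1
        simp [Dmat, hne.symm]
      · by_cases h2 : k = i1
        · subst h2
          simp [Dmat, h1, hi1, Fin.ext_iff]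
        · have h3 : (k : ℕ) ≠ (i : ℕ) + 1 := by
            intro hc
            exact h2 (by simp [hi1, Fin.ext_iff, hc])
          simp [Dmat, h1, h2, h3]
    rw [Finset.sum_congr rfl (fun k _ => key k), Finset.sum_add_distrib,
      Finset.sum_ite_eq' Finset.univ i, Finset.sum_ite_eq' Finset.univ i1]
    simp [sub_eq_add_neg]
  · rw [dif_neg h]
    have hi : (i : ℕ) = m := by omega
    rw [Finset.sum_eq_single i]
    · simp [Dmat]
    · intro k _ hk
      have h2 : (k : ℕ) ≠ (i : ℕ) + 1 := by omega
      simp [Dmat, hk, h2]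
    · simp

end HookContent

namespace HookContent
open Finset Polynomial

theorem Bmat_col0 (m : ℕ) (A : Fin (m + 1) → ℕ) (i : Fin (m + 1)) : Bmat m A i 0 = 1 := by
  simp [Bmat]

theorem DB_col0 (m : ℕ) (A : Fin (m + 1) → ℕ) (i : Fin (m + 1)) :
    (Dmat m * Bmat m A) i 0 = if i = Fin.last m then 1 else 0 := by
  rw [DB_apply]
  by_cases h : (i : ℕ) < m
  · rw [dif_pos h, Bmat_col0, Bmat_col0]
    have : i ≠ Fin.last m := by
      simp [Fin.ext_iff]
      omega
    simp [this]
  · rw [dif_neg h, Bmat_col0]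
    have : i = Fin.last m := by
      simp [Fin.ext_iff]
      omega
    simp [this]

theorem det_DB (m : ℕ) (A : Fin (m + 1) → ℕ) :
    (Dmat m * Bmat m A).det
      = (-1 : ℚ) ^ m * ((Dmat m * Bmat m A).submatrix Fin.castSucc Fin.succ).det := by
  rw [Matrix.det_succ_column_zero]
  rw [Finset.sum_eq_single (Fin.last m)]
  · rw [DB_col0]
    simp [Fin.succAbove_last]
  · intro k _ hk
    rw [DB_col0, if_neg hk]
    ring
  · simp

theorem submatrix_DB_apply (m : ℕ) (A : Fin (m + 1) → ℕ) (i j : Fin m) :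
    ((Dmat m * Bmat m A).submatrix Fin.castSucc Fin.succ) i j
      = ((descPochhammer ℚ ((j : ℕ) + 1)).eval ((A i.castSucc : ℚ))
          - (descPochhammer ℚ ((j : ℕ) + 1)).eval ((A i.succ : ℚ))) / ((j : ℚ) + 1) := by
  rw [Matrix.submatrix_apply, DB_apply]
  have h : ((i.castSucc : Fin (m+1)) : ℕ) < m := by simp [i.isLt]
  rw [dif_pos h]
  have hsucc : (⟨((i.castSucc : Fin (m+1)) : ℕ) + 1, by omega⟩ : Fin (m + 1)) = i.succ := by
    simp [Fin.ext_iff]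
  rw [hsucc]
  have hj0 : (j.succ : Fin (m+1)) ≠ 0 := Fin.succ_ne_zero j
  have hjv : ((j.succ : Fin (m+1)) : ℕ) = (j : ℕ) + 1 := rfl
  simp only [Bmat, Matrix.of_apply, if_neg hj0, hjv]
  push_cast
  ring

theorem vsum (m : ℕ) (A : Fin (m + 1) → ℕ) (hA : ∀ i : Fin m, A i.succ ≤ A i.castSucc) :
    ∑ b ∈ Fintype.piFinset (fun i : Fin m => Finset.Ico (A i.succ) (A i.castSucc)),
      (Matrix.vandermonde fun i => ((b i : ℚ))).det
    = (-1 : ℚ) ^ m * (Matrix.vandermonde fun i : Fin (m + 1) => ((A i : ℚ))).det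
        / (Nat.factorial m : ℚ) := by
  have step1 : ∀ b : Fin m → ℕ,
      (Matrix.vandermonde fun i => ((b i : ℚ))).det
        = (Matrix.of fun i j : Fin m => (descPochhammer ℚ (j : ℕ)).eval ((b i : ℚ))).det := by
    intro b
    exact Matrix.det_eval_matrixOfPolynomials_eq_det_vandermonde (fun i => ((b i : ℚ)))
      (fun j => descPochhammer ℚ (j : ℕ)) (fun i => descPochhammer_natDegree (R := ℚ) i)
      (fun i => monic_descPochhammer ℚ _)
  rw [Finset.sum_congr rfl (fun b _ => step1 b)]
  rw [det_piFinset_sum (fun i : Fin m => Finset.Ico (A i.succ) (A i.castSucc))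
    (fun _ x j => (descPochhammer ℚ (j : ℕ)).eval ((x : ℚ)))]
  have step3 : (Matrix.of fun i j : Fin m =>
        ∑ x ∈ Finset.Ico (A i.succ) (A i.castSucc), (descPochhammer ℚ (j : ℕ)).eval ((x : ℚ)))
      = (Dmat m * Bmat m A).submatrix Fin.castSucc Fin.succ := by
    ext i j
    rw [Matrix.of_apply, submatrix_DB_apply, sum_Ico_desc _ _ _ (hA i)]
  rw [step3]
  have h5 := det_DB m A
  have h6 : (Dmat m * Bmat m A).det = ((Nat.factorial m : ℚ))⁻¹
      * (Matrix.vandermonde fun i : Fin (m+1) => ((A i : ℚ))).det := by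
    rw [Matrix.det_mul, det_Dmat, det_Bmat, one_mul]
  rw [h6] at h5
  have hm : ((-1 : ℚ) ^ m) * ((-1 : ℚ) ^ m) = 1 := by
    rw [← pow_add]
    exact Even.neg_one_pow (⟨m, rfl⟩ : Even (m + m))
  calc ((Dmat m * Bmat m A).submatrix Fin.castSucc Fin.succ).det
      = (-1 : ℚ)^m * ((-1 : ℚ)^m * ((Dmat m * Bmat m A).submatrix Fin.castSucc Fin.succ).det) := by
        rw [← mul_assoc, hm, one_mul]
    _ = (-1 : ℚ)^m * (((Nat.factorial m : ℚ))⁻¹ * (Matrix.vandermonde fun i : Fin (m+1) => ((A i : ℚ))).det) := by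
        rw [← h5]
    _ = (-1 : ℚ)^m * (Matrix.vandermonde fun i : Fin (m+1) => ((A i : ℚ))).det / (Nat.factorial m : ℚ) := by
        ring
end HookContent

open Finset

namespace HookContent

theorem rowLen_mono {ν μ : YoungDiagram} (h : ν ≤ μ) (i : ℕ) : ν.rowLen i ≤ μ.rowLen i := by
  by_contra hc
  push_neg at hc
  have : (i, μ.rowLen i) ∈ ν := YoungDiagram.mem_iff_lt_rowLen.mpr hc
  have := h this
  rw [YoungDiagram.mem_iff_lt_rowLen] at this
  omega

theorem ext_rowLen {ν μ : YoungDiagram} (h : ∀ i, ν.rowLen i = μ.rowLen i) : ν = μ := by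
  ext ⟨i, j⟩
  simp only [YoungDiagram.mem_cells]
  rw [YoungDiagram.mem_iff_lt_rowLen, YoungDiagram.mem_iff_lt_rowLen, h]

theorem rowLen_eq_zero {μ : YoungDiagram} {i : ℕ} (h : (i, 0) ∉ μ) : μ.rowLen i = 0 := by
  by_contra hc
  exact h (YoungDiagram.mem_iff_lt_rowLen.mpr (by omega))

/-- The sub-Young-diagram of cells of `μ` where the tableau `T` has entry `< m`. -/
def subShape (μ : YoungDiagram) (m : ℕ) (T : SemistandardYoungTableau μ) : YoungDiagram where
  cells := μ.cells.filter fun c => T c.1 c.2 < m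
  isLowerSet := by
    intro ⟨i1, j1⟩ ⟨i2, j2⟩ hle hmem
    simp only [Finset.coe_filter, Set.mem_setOf_eq, Finset.mem_coe, YoungDiagram.mem_cells] at *
    obtain ⟨hi, hj⟩ := Prod.mk_le_mk.mp hle
    refine ⟨μ.up_left_mem hi hj hmem.1, ?_⟩
    calc T i2 j2 ≤ T i2 j1 := T.row_weak_of_le hj (μ.up_left_mem hi le_rfl hmem.1)
    _ ≤ T i1 j1 := T.col_weak hi hmem.1
    _ < m := hmem.2

theorem mem_subShape {μ : YoungDiagram} {m : ℕ} {T : SemistandardYoungTableau μ} {i j : ℕ} :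
    (i, j) ∈ subShape μ m T ↔ (i, j) ∈ μ ∧ T i j < m := by
  show (i, j) ∈ (subShape μ m T).cells ↔ _
  simp [subShape]

theorem subShape_le {μ : YoungDiagram} {m : ℕ} {T : SemistandardYoungTableau μ} :
    subShape μ m T ≤ μ := by
  intro c hc
  obtain ⟨i, j⟩ := c
  exact (mem_subShape.mp hc).1

theorem subShape_rowLen_lower {μ : YoungDiagram} {m : ℕ} {T : SemistandardYoungTableau μ}
    (hT : ∀ i j : ℕ, (i, j) ∈ μ → T i j < m + 1) (i : ℕ) :
    μ.rowLen (i + 1) ≤ (subShape μ m T).rowLen i := by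
  by_contra hc
  push_neg at hc
  set r := (subShape μ m T).rowLen i with hr
  have h1 : (i + 1, r) ∈ μ := YoungDiagram.mem_iff_lt_rowLen.mpr hc
  have h2 : (i, r) ∈ μ := μ.up_left_mem (Nat.le_succ i) le_rfl h1
  have h3 : T i r < T (i + 1) r := T.col_strict (Nat.lt_succ_self i) h1
  have h4 : T (i + 1) r < m + 1 := hT _ _ h1
  have h5 : (i, r) ∈ subShape μ m T := mem_subShape.mpr ⟨h2, by omega⟩
  rw [YoungDiagram.mem_iff_lt_rowLen] at h5
  omega

theorem subShape_rowLen_zero {μ : YoungDiagram} {m : ℕ} {T : SemistandardYoungTableau μ}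
    {i : ℕ} (hi : m ≤ i) : (subShape μ m T).rowLen i = 0 := by
  apply rowLen_eq_zero
  intro hc
  obtain ⟨hmem, hlt⟩ := mem_subShape.mp hc
  have := le_entry T hmem
  omega

end HookContent

namespace HookContent
open Finset

/-- The Young diagram with row lengths `t 0, t 1, ..., t (m-1)` (for antitone `t`). -/
def shapeOfTuple {m : ℕ} (t : Fin m → ℕ) : YoungDiagram where
  cells := ((Finset.range m) ×ˢ (Finset.range (Finset.univ.sup t))).filter
    fun c => ∀ k : Fin m, (k : ℕ) ≤ c.1 → c.2 < t k
  isLowerSet := by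
    intro ⟨i1, j1⟩ ⟨i2, j2⟩ hle hmem
    simp only [Finset.coe_filter, Set.mem_setOf_eq, Finset.mem_product, Finset.mem_range] at *
    obtain ⟨hi, hj⟩ := Prod.mk_le_mk.mp hle
    obtain ⟨⟨him, hjs⟩, hcond⟩ := hmem
    exact ⟨⟨by omega, by omega⟩, fun k hk => lt_of_le_of_lt hj (hcond k (by omega))⟩

theorem mem_shapeOfTuple {m : ℕ} {t : Fin m → ℕ} {i j : ℕ} :
    (i, j) ∈ shapeOfTuple t ↔ i < m ∧ ∀ k : Fin m, (k : ℕ) ≤ i → j < t k := by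
  show (i, j) ∈ (shapeOfTuple t).cells ↔ _
  simp only [shapeOfTuple, YoungDiagram.mem_mk, Finset.mem_filter, Finset.mem_product,
    Finset.mem_range]
  constructor
  · rintro ⟨⟨h1, _⟩, h3⟩
    exact ⟨h1, h3⟩
  · rintro ⟨h1, h2⟩
    refine ⟨⟨h1, ?_⟩, h2⟩
    have h0 : (0 : ℕ) < m := by omega
    have := h2 ⟨0, h0⟩ (Nat.zero_le i)
    exact lt_of_lt_of_le this (Finset.le_sup (Finset.mem_univ _))

theorem mem_shapeOfTuple_of_antitone {m : ℕ} {t : Fin m → ℕ}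
    (ht : ∀ a b : Fin m, a ≤ b → t b ≤ t a) {i j : ℕ} :
    (i, j) ∈ shapeOfTuple t ↔ ∃ h : i < m, j < t ⟨i, h⟩ := by
  rw [mem_shapeOfTuple]
  constructor
  · rintro ⟨h1, h2⟩
    exact ⟨h1, h2 ⟨i, h1⟩ le_rfl⟩
  · rintro ⟨h1, h2⟩
    exact ⟨h1, fun k hk => lt_of_lt_of_le h2 (ht k ⟨i, h1⟩ hk)⟩

theorem rowLen_shapeOfTuple {m : ℕ} {t : Fin m → ℕ}
    (ht : ∀ a b : Fin m, a ≤ b → t b ≤ t a) (i : Fin m) :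
    (shapeOfTuple t).rowLen (i : ℕ) = t i := by
  have : ∀ j : ℕ, j < (shapeOfTuple t).rowLen (i : ℕ) ↔ j < t i := by
    intro j
    rw [← YoungDiagram.mem_iff_lt_rowLen, mem_shapeOfTuple_of_antitone ht]
    constructor
    · rintro ⟨h1, h2⟩
      convert h2 using 2
    · intro h
      exact ⟨i.isLt, by convert h using 2⟩
  by_contra hc
  rcases Nat.lt_or_ge ((shapeOfTuple t).rowLen (i : ℕ)) (t i) with h | h
  · have := (this _).mpr h
    omega
  · have h2 : t i < (shapeOfTuple t).rowLen i := by omega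
    have := (this _).mp h2
    omega

theorem rowLen_shapeOfTuple_zero {m : ℕ} {t : Fin m → ℕ} {i : ℕ} (hi : m ≤ i) :
    (shapeOfTuple t).rowLen i = 0 := by
  apply rowLen_eq_zero
  intro hc
  have := (mem_shapeOfTuple.mp hc).1
  omega

theorem colLen_shapeOfTuple_le {m : ℕ} {t : Fin m → ℕ} :
    (shapeOfTuple t).colLen 0 ≤ m := by
  by_contra hc
  push_neg at hc
  have : (m, 0) ∈ shapeOfTuple t := YoungDiagram.mem_iff_lt_colLen.mpr hc
  have := (mem_shapeOfTuple.mp this).1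
  omega

end HookContent

namespace HookContent

/-- Restriction of a tableau to a smaller shape. -/
def restrict {μ : YoungDiagram} (ν : YoungDiagram) (hν : ν ≤ μ) (T : SemistandardYoungTableau μ) :
    SemistandardYoungTableau ν where
  entry i j := if (i, j) ∈ ν then T i j else 0
  row_weak' := by
    intro i j1 j2 hj hmem
    have h1 : (i, j1) ∈ ν := ν.up_left_mem le_rfl (le_of_lt hj) hmem
    rw [if_pos h1, if_pos hmem]
    exact T.row_weak hj (hν hmem)
  col_strict' := by
    intro i1 i2 j hi hmem
    have h1 : (i1, j) ∈ ν := ν.up_left_mem (le_of_lt hi) le_rfl hmem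
    rw [if_pos h1, if_pos hmem]
    exact T.col_strict hi (hν hmem)
  zeros' := by
    intro i j h
    rw [if_neg h]

theorem restrict_apply {μ : YoungDiagram} (ν : YoungDiagram) (hν : ν ≤ μ)
    (T : SemistandardYoungTableau μ) (i j : ℕ) :
    restrict ν hν T i j = if (i, j) ∈ ν then T i j else 0 := rfl

/-- Extension of a tableau on `ν` to `μ` by filling new cells with value `m`. -/
def extend {μ : YoungDiagram} (ν : YoungDiagram) (hν : ν ≤ μ) (m : ℕ)
    (S : SemistandardYoungTableau ν) (hS : ∀ i j : ℕ, (i, j) ∈ ν → S i j < m)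
    (hstrip : ∀ i j : ℕ, (i + 1, j) ∈ μ → (i, j) ∈ ν) :
    SemistandardYoungTableau μ where
  entry i j := if (i, j) ∈ ν then S i j else if (i, j) ∈ μ then m else 0
  row_weak' := by
    intro i j1 j2 hj hmem
    by_cases h2 : (i, j2) ∈ ν
    · have h1 : (i, j1) ∈ ν := ν.up_left_mem le_rfl (le_of_lt hj) h2
      rw [if_pos h1, if_pos h2]
      exact S.row_weak hj h2
    · rw [if_neg h2, if_pos hmem]
      by_cases h1 : (i, j1) ∈ ν
      · rw [if_pos h1]
        exact le_of_lt (hS _ _ h1)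
      · have h3 : (i, j1) ∈ μ := μ.up_left_mem le_rfl (le_of_lt hj) hmem
        rw [if_neg h1, if_pos h3]
  col_strict' := by
    intro i1 i2 j hi hmem
    have h0 : i2 - 1 + 1 = i2 := by omega
    have hν1 : (i1, j) ∈ ν :=
      ν.up_left_mem (show i1 ≤ i2 - 1 by omega) le_rfl
        (hstrip (i2 - 1) j (by rw [h0]; exact hmem))
    rw [if_pos hν1]
    by_cases h2 : (i2, j) ∈ ν
    · rw [if_pos h2]
      exact S.col_strict hi h2
    · rw [if_neg h2, if_pos hmem]
      exact hS _ _ hν1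
  zeros' := by
    intro i j h
    have h1 : (i, j) ∉ ν := fun hc => h (hν hc)
    rw [if_neg h1, if_neg h]

theorem extend_apply {μ : YoungDiagram} (ν : YoungDiagram) (hν : ν ≤ μ) (m : ℕ)
    (S : SemistandardYoungTableau ν) (hS : ∀ i j : ℕ, (i, j) ∈ ν → S i j < m)
    (hstrip : ∀ i j : ℕ, (i + 1, j) ∈ μ → (i, j) ∈ ν) (i j : ℕ) :
    extend ν hν m S hS hstrip i j
      = if (i, j) ∈ ν then S i j else if (i, j) ∈ μ then m else 0 := rfl

end HookContent

namespace HookContent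
open Finset

theorem subShape_extend_eq {μ : YoungDiagram} (ν : YoungDiagram) (hν : ν ≤ μ) (m : ℕ)
    (S : SemistandardYoungTableau ν) (hS : ∀ i j : ℕ, (i, j) ∈ ν → S i j < m)
    (hstrip : ∀ i j : ℕ, (i + 1, j) ∈ μ → (i, j) ∈ ν) :
    subShape μ m (extend ν hν m S hS hstrip) = ν := by
  ext ⟨i, j⟩
  simp only [YoungDiagram.mem_cells]
  rw [mem_subShape, extend_apply]
  constructor
  · rintro ⟨hμ, hlt⟩
    by_contra hn
    rw [if_neg hn, if_pos hμ] at hlt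
    omega
  · intro hn
    exact ⟨hν hn, by rw [if_pos hn]; exact hS _ _ hn⟩

theorem card_rec (μ : YoungDiagram) (m : ℕ) (hcol : μ.colLen 0 ≤ m + 1) :
    Nat.card {T : SemistandardYoungTableau μ // ∀ i j : ℕ, (i, j) ∈ μ → T i j < m + 1}
      = ∑ t ∈ Fintype.piFinset
            (fun i : Fin m => Finset.Icc (μ.rowLen ((i : ℕ) + 1)) (μ.rowLen (i : ℕ))),
          Nat.card {S : SemistandardYoungTableau (shapeOfTuple t) //
            ∀ i j : ℕ, (i, j) ∈ shapeOfTuple t → S i j < m} := by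
  classical
  rw [nat_card_eq_sum_fibers
    (fun T : {T : SemistandardYoungTableau μ // ∀ i j : ℕ, (i, j) ∈ μ → T i j < m + 1} =>
      fun i : Fin m => (subShape μ m T.1).rowLen (i : ℕ))
    (Fintype.piFinset (fun i : Fin m => Finset.Icc (μ.rowLen ((i : ℕ) + 1)) (μ.rowLen (i : ℕ))))
    (by
      intro T
      rw [Fintype.mem_piFinset]
      intro i
      rw [Finset.mem_Icc]
      exact ⟨subShape_rowLen_lower T.2 i, rowLen_mono subShape_le _⟩)]
  refine Finset.sum_congr rfl fun t htm => ?_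
  rw [Fintype.mem_piFinset] at htm
  have hub : ∀ i : Fin m, t i ≤ μ.rowLen (i : ℕ) := fun i => (Finset.mem_Icc.mp (htm i)).2
  have hlb : ∀ i : Fin m, μ.rowLen ((i : ℕ) + 1) ≤ t i := fun i => (Finset.mem_Icc.mp (htm i)).1
  have ht : ∀ a b : Fin m, a ≤ b → t b ≤ t a := by
    intro a b hab
    rcases eq_or_lt_of_le hab with h | h
    · rw [h]
    · calc t b ≤ μ.rowLen (b : ℕ) := hub b
      _ ≤ μ.rowLen ((a : ℕ) + 1) := μ.rowLen_anti _ _ (by exact_mod_cast h)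
      _ ≤ t a := hlb a
  have hsub : shapeOfTuple t ≤ μ := by
    intro ⟨i, j⟩ hij
    obtain ⟨hi, hj⟩ := (mem_shapeOfTuple_of_antitone ht).mp hij
    exact YoungDiagram.mem_iff_lt_rowLen.mpr (lt_of_lt_of_le hj (hub ⟨i, hi⟩))
  have hstrip : ∀ i j : ℕ, (i + 1, j) ∈ μ → (i, j) ∈ shapeOfTuple t := by
    intro i j hij
    have hcl : i + 1 < μ.colLen j := YoungDiagram.mem_iff_lt_colLen.mp hij
    have him : i < m := by
      have := μ.colLen_anti 0 j (Nat.zero_le j)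
      omega
    rw [mem_shapeOfTuple_of_antitone ht]
    refine ⟨him, ?_⟩
    calc j < μ.rowLen (i + 1) := YoungDiagram.mem_iff_lt_rowLen.mp hij
    _ ≤ t ⟨i, him⟩ := hlb ⟨i, him⟩
  -- key: for T in the fiber, subShape μ m T = shapeOfTuple t
  have key : ∀ (T : SemistandardYoungTableau μ), (∀ i j : ℕ, (i, j) ∈ μ → T i j < m + 1) →
      (∀ i : Fin m, (subShape μ m T).rowLen (i : ℕ) = t i) → subShape μ m T = shapeOfTuple t := by
    intro T hT hφ
    apply ext_rowLen
    intro i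
    by_cases hi : i < m
    · rw [hφ ⟨i, hi⟩, rowLen_shapeOfTuple ht ⟨i, hi⟩]
    · rw [subShape_rowLen_zero (by omega), rowLen_shapeOfTuple_zero (by omega)]
  apply Nat.card_congr
  refine Equiv.mk ?_ ?_ ?_ ?_
  · -- toFun
    intro x
    refine ⟨restrict (shapeOfTuple t) hsub x.1.1, ?_⟩
    intro i j hij
    rw [restrict_apply, if_pos hij]
    have hsub' : (i, j) ∈ subShape μ m x.1.1 := by
      rw [key x.1.1 x.1.2 (fun i => congrFun x.2 i)]
      exact hij
    exact (mem_subShape.mp hsub').2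
  · -- invFun
    intro S
    refine ⟨⟨extend (shapeOfTuple t) hsub m S.1 S.2 hstrip, ?_⟩, ?_⟩
    · intro i j hij
      rw [extend_apply]
      by_cases h : (i, j) ∈ shapeOfTuple t
      · rw [if_pos h]
        exact lt_of_lt_of_le (S.2 i j h) (Nat.le_succ m)
      · rw [if_neg h, if_pos hij]
        omega
    · funext i
      rw [subShape_extend_eq, rowLen_shapeOfTuple ht i]
  · -- left_inv
    intro x
    apply Subtype.ext
    apply Subtype.ext
    apply SemistandardYoungTableau.ext
    intro i j
    have heq := key x.1.1 x.1.2 (fun i => congrFun x.2 i)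
    rw [extend_apply]
    by_cases h : (i, j) ∈ shapeOfTuple t
    · rw [if_pos h, restrict_apply, if_pos h]
    · rw [if_neg h]
      by_cases hμ : (i, j) ∈ μ
      · rw [if_pos hμ]
        have hns : (i, j) ∉ subShape μ m x.1.1 := by rw [heq]; exact h
        rw [mem_subShape] at hns
        push_neg at hns
        have h1 := hns hμ
        have h2 := x.1.2 i j hμ
        omega
      · rw [if_neg hμ, (x.1.1).zeros hμ]
  · -- right_inv
    intro S
    apply Subtype.ext
    apply SemistandardYoungTableau.ext
    intro i j
    rw [restrict_apply]
    by_cases h : (i, j) ∈ shapeOfTuple t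
    · rw [if_pos h, extend_apply, if_pos h]
    · rw [if_neg h, (S.1).zeros h]

end HookContent


namespace HookContent
open Finset

theorem prod_Ioi_sub {n : ℕ} (x : Fin n → ℚ) :
    (∏ i : Fin n, ∏ j ∈ Finset.Ioi i, (x i - x j))
      = (-1) ^ (n.choose 2) * (Matrix.vandermonde x).det := by
  rw [Matrix.det_vandermonde]
  have h1 : ∀ i : Fin n, (∏ j ∈ Finset.Ioi i, (x i - x j))
      = (-1 : ℚ) ^ (Finset.Ioi i).card * ∏ j ∈ Finset.Ioi i, (x j - x i) := by
    intro i
    rw [← Finset.prod_const, ← Finset.prod_mul_distrib]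
    exact Finset.prod_congr rfl fun j _ => by ring
  rw [Finset.prod_congr rfl fun i _ => h1 i, Finset.prod_mul_distrib]
  congr 1
  rw [Finset.prod_pow_eq_pow_sum]
  congr 1
  have h2 : ∀ i : Fin n, (Finset.Ioi i).card = n - 1 - (i : ℕ) := fun i => Fin.card_Ioi i
  rw [Finset.sum_congr rfl fun i _ => h2 i]
  rw [Fin.sum_univ_eq_sum_range (fun i => n - 1 - i)]
  rw [← Finset.sum_range_reflect]
  have h3 : ∀ j ∈ Finset.range n, n - 1 - (n - 1 - j) = j := by
    intro j hj
    rw [Finset.mem_range] at hj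
    omega
  rw [Finset.sum_congr rfl h3, Finset.sum_range_id, Nat.choose_two_right]

theorem card_eq_zero_of_colLen_gt (μ : YoungDiagram) (m : ℕ) (h : m < μ.colLen 0) :
    Nat.card {T : SemistandardYoungTableau μ // ∀ i j : ℕ, (i, j) ∈ μ → T i j < m} = 0 := by
  have : IsEmpty {T : SemistandardYoungTableau μ // ∀ i j : ℕ, (i, j) ∈ μ → T i j < m} := by
    constructor
    intro T
    have hmem : (m, 0) ∈ μ := YoungDiagram.mem_iff_lt_colLen.mpr h
    have h1 := le_entry T.1 hmem
    have h2 := T.2 m 0 hmem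
    omega
  exact Nat.card_of_isEmpty

theorem card_eq_one_of_colLen_zero (μ : YoungDiagram) (m : ℕ) (h : μ.colLen 0 = 0) :
    Nat.card {T : SemistandardYoungTableau μ // ∀ i j : ℕ, (i, j) ∈ μ → T i j < m} = 1 := by
  have hno : ∀ i j : ℕ, (i, j) ∉ μ := by
    intro i j hc
    have h1 : i < μ.colLen j := YoungDiagram.mem_iff_lt_colLen.mp hc
    have h2 := μ.colLen_anti 0 j (Nat.zero_le j)
    omega
  rw [Nat.card_eq_one_iff_unique]
  constructor
  · constructor
    intro a b
    apply Subtype.ext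
    apply SemistandardYoungTableau.ext
    intro i j
    rw [a.1.zeros (hno i j), b.1.zeros (hno i j)]
  · exact ⟨⟨SemistandardYoungTableau.highestWeight μ, fun i j hij => absurd hij (hno i j)⟩⟩

/-- `a`-values: `aval μ m i = μ.rowLen i + (m - 1 - i)`. -/
def aval (μ : YoungDiagram) (m : ℕ) (i : ℕ) : ℕ := μ.rowLen i + (m - 1 - i)

theorem key : ∀ (m : ℕ) (μ : YoungDiagram), μ.colLen 0 ≤ m →
    (Nat.card {T : SemistandardYoungTableau μ // ∀ i j : ℕ, (i, j) ∈ μ → T i j < m} : ℚ)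
      = (∏ i : Fin m, ∏ j ∈ Finset.Ioi i, ((aval μ m (i : ℕ) : ℚ) - (aval μ m (j : ℕ) : ℚ)))
        / ∏ i : Fin m, (Nat.factorial (i : ℕ) : ℚ) := by
  intro m
  induction m with
  | zero =>
    intro μ hcol
    rw [card_eq_one_of_colLen_zero μ 0 (Nat.le_zero.mp hcol)]
    simp
  | succ m ih =>
    intro μ hcol
    rw [card_rec μ m hcol]
    set A : Fin (m + 1) → ℕ := fun i => aval μ (m + 1) (i : ℕ) with hA
    have hAmono : ∀ i : Fin m, A i.succ ≤ A i.castSucc := by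
      intro i
      simp only [hA, aval, Fin.val_succ, Fin.coe_castSucc]
      have := μ.rowLen_anti (i : ℕ) ((i : ℕ) + 1) (Nat.le_succ _)
      have hi := i.isLt
      omega
    have hterm : ∀ t ∈ Fintype.piFinset
        (fun i : Fin m => Finset.Icc (μ.rowLen ((i : ℕ) + 1)) (μ.rowLen (i : ℕ))),
        (Nat.card {S : SemistandardYoungTableau (shapeOfTuple t) //
            ∀ i j : ℕ, (i, j) ∈ shapeOfTuple t → S i j < m} : ℚ)
          = ((-1 : ℚ) ^ (m.choose 2) / ∏ i : Fin m, (Nat.factorial (i : ℕ) : ℚ))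
              * (Matrix.vandermonde
                  (fun i : Fin m => ((t i + (m - 1 - (i : ℕ)) : ℕ) : ℚ))).det := by
      intro t htm
      rw [Fintype.mem_piFinset] at htm
      have hub : ∀ i : Fin m, t i ≤ μ.rowLen (i : ℕ) := fun i => (Finset.mem_Icc.mp (htm i)).2
      have hlb : ∀ i : Fin m, μ.rowLen ((i : ℕ) + 1) ≤ t i :=
        fun i => (Finset.mem_Icc.mp (htm i)).1
      have ht : ∀ a b : Fin m, a ≤ b → t b ≤ t a := by
        intro a b hab
        rcases eq_or_lt_of_le hab with h | h
        · rw [h]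
        · calc t b ≤ μ.rowLen (b : ℕ) := hub b
          _ ≤ μ.rowLen ((a : ℕ) + 1) := μ.rowLen_anti _ _ (by exact_mod_cast h)
          _ ≤ t a := hlb a
      rw [ih (shapeOfTuple t) colLen_shapeOfTuple_le]
      have hb : ∀ i : Fin m, aval (shapeOfTuple t) m (i : ℕ) = t i + (m - 1 - (i : ℕ)) := by
        intro i
        rw [aval, rowLen_shapeOfTuple ht i]
      simp only [hb]
      rw [prod_Ioi_sub]
      ring
    rw [Nat.cast_sum, Finset.sum_congr rfl hterm, ← Finset.mul_sum]
    have hre : (∑ t ∈ Fintype.piFinset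
          (fun i : Fin m => Finset.Icc (μ.rowLen ((i : ℕ) + 1)) (μ.rowLen (i : ℕ))),
        (Matrix.vandermonde (fun i : Fin m => ((t i + (m - 1 - (i : ℕ)) : ℕ) : ℚ))).det)
        = ∑ b ∈ Fintype.piFinset (fun i : Fin m => Finset.Ico (A i.succ) (A i.castSucc)),
            (Matrix.vandermonde fun i => ((b i : ℚ))).det := by
      apply Finset.sum_nbij' (i := fun t => fun i : Fin m => t i + (m - 1 - (i : ℕ)))
        (j := fun b => fun i : Fin m => b i - (m - 1 - (i : ℕ)))
      · intro t htm
        rw [Fintype.mem_piFinset] at *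
        intro i
        have := htm i
        rw [Finset.mem_Icc] at this
        rw [Finset.mem_Ico]
        simp only [hA, aval, Fin.val_succ, Fin.coe_castSucc]
        have hi := i.isLt
        omega
      · intro b hbm
        rw [Fintype.mem_piFinset] at *
        intro i
        have := hbm i
        rw [Finset.mem_Ico] at this
        rw [Finset.mem_Icc]
        simp only [hA, aval, Fin.val_succ, Fin.coe_castSucc] at this
        have hi := i.isLt
        omega
      · intro t htm
        funext i
        simp
      · intro b hbm
        funext i
        show b i - (m - 1 - (i : ℕ)) + (m - 1 - (i : ℕ)) = b i
        rw [Fintype.mem_piFinset] at hbm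
        have := hbm i
        rw [Finset.mem_Ico] at this
        simp only [hA, aval, Fin.val_succ, Fin.coe_castSucc] at this
        have hi := i.isLt
        omega
      · intro t htm
        rfl
    rw [hre, vsum m A hAmono]
    rw [prod_Ioi_sub (fun i : Fin (m + 1) => (A i : ℚ))]
    have hsf : (∏ i : Fin (m + 1), (Nat.factorial (i : ℕ) : ℚ))
        = (∏ i : Fin m, (Nat.factorial (i : ℕ) : ℚ)) * (Nat.factorial m : ℚ) := by
      rw [Fin.prod_univ_castSucc]
      simp
    have hsign : ((-1 : ℚ)) ^ ((m + 1).choose 2) = (-1) ^ (m.choose 2) * (-1) ^ m := by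
      rw [Nat.choose_succ_succ, Nat.choose_one_right, pow_add]
      ring
    rw [hsf, hsign]
    have hf1 : (∏ i : Fin m, (Nat.factorial (i : ℕ) : ℚ)) ≠ 0 := by
      apply Finset.prod_ne_zero_iff.mpr
      intro i _
      exact_mod_cast (Nat.factorial_pos _).ne'
    have hf2 : ((Nat.factorial m : ℚ)) ≠ 0 := by
      exact_mod_cast (Nat.factorial_pos _).ne'
    field_simp

end HookContent


namespace HookContent
open Finset

theorem hook_row (μ : YoungDiagram) (m : ℕ) (hcol : μ.colLen 0 ≤ m) {i : ℕ} (him : i < m) :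
    (∏ j ∈ Finset.range (μ.rowLen i), hookLength μ i j)
      * (∏ k ∈ Finset.Ico (i + 1) m, (aval μ m i - aval μ m k))
      = Nat.factorial (aval μ m i) := by
  classical
  have fact0 : ∀ j, j < μ.rowLen i → (i, j) ∈ μ :=
    fun j hj => YoungDiagram.mem_iff_lt_rowLen.mpr hj
  have fact1 : ∀ j, j < μ.rowLen i → i < μ.colLen j :=
    fun j hj => YoungDiagram.mem_iff_lt_colLen.mp (fact0 j hj)
  have fact2 : ∀ j : ℕ, μ.colLen j ≤ m := fun j => le_trans (μ.colLen_anti 0 j (Nat.zero_le j)) hcol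
  have hmono : ∀ j j', j < j' → j' < μ.rowLen i → hookLength μ i j' < hookLength μ i j := by
    intro j j' h1 h2
    have c1 := fact1 j' h2
    have c2 : μ.colLen j' ≤ μ.colLen j := μ.colLen_anti j j' (le_of_lt h1)
    simp only [hookLength]
    omega
  have havmono : ∀ k k', k < k' → k' < m → aval μ m k' < aval μ m k := by
    intro k k' h1 h2
    have := μ.rowLen_anti k k' (le_of_lt h1)
    simp only [aval]
    omega
  have inj1 : Set.InjOn (hookLength μ i) (Finset.range (μ.rowLen i)) := by
    intro j hj j' hj' heq
    rw [Finset.coe_range, Set.mem_Iio] at hj hj'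
    by_contra hne
    rcases lt_or_gt_of_ne hne with h | h
    · have := hmono j j' h hj'; omega
    · have := hmono j' j h hj; omega
  have inj2 : Set.InjOn (fun k => aval μ m i - aval μ m k) (Finset.Ico (i + 1) m) := by
    intro k hk k' hk' heq
    rw [Finset.coe_Ico, Set.mem_Ico] at hk hk'
    have e1 := havmono i k (by omega) hk.2
    have e2 := havmono i k' (by omega) hk'.2
    simp only at heq
    by_contra hne
    rcases lt_or_gt_of_ne hne with h | h
    · have := havmono k k' h hk'.2; omega
    · have := havmono k' k h hk.2; omega
  have hsub1 : ∀ j ∈ Finset.range (μ.rowLen i),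
      hookLength μ i j ∈ Finset.Ico 1 (aval μ m i + 1) := by
    intro j hj
    rw [Finset.mem_range] at hj
    have c1 := fact1 j hj
    have c2 := fact2 j
    rw [Finset.mem_Ico]
    simp only [hookLength, aval]
    omega
  have hsub2 : ∀ k ∈ Finset.Ico (i + 1) m,
      aval μ m i - aval μ m k ∈ Finset.Ico 1 (aval μ m i + 1) := by
    intro k hk
    rw [Finset.mem_Ico] at hk
    have := havmono i k (by omega) hk.2
    rw [Finset.mem_Ico]
    omega
  have hdis : ∀ j ∈ Finset.range (μ.rowLen i), ∀ k ∈ Finset.Ico (i + 1) m,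
      hookLength μ i j ≠ aval μ m i - aval μ m k := by
    intro j hj k hk heq
    rw [Finset.mem_range] at hj
    rw [Finset.mem_Ico] at hk
    have c1 := fact1 j hj
    have c2 := fact2 j
    have c3 : μ.rowLen k ≤ μ.rowLen i := μ.rowLen_anti i k (by omega)
    by_cases hkj : (k, j) ∈ μ
    · have d1 : j < μ.rowLen k := YoungDiagram.mem_iff_lt_rowLen.mp hkj
      have d2 : k < μ.colLen j := YoungDiagram.mem_iff_lt_colLen.mp hkj
      simp only [hookLength, aval] at heq
      omega
    · have d1 : ¬ j < μ.rowLen k := fun hc => hkj (YoungDiagram.mem_iff_lt_rowLen.mpr hc)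
      have d2 : ¬ k < μ.colLen j := fun hc => hkj (YoungDiagram.mem_iff_lt_colLen.mpr hc)
      simp only [hookLength, aval] at heq
      omega
  set s1 := (Finset.range (μ.rowLen i)).image (hookLength μ i) with hs1
  set s2 := (Finset.Ico (i + 1) m).image (fun k => aval μ m i - aval μ m k) with hs2
  have hd : Disjoint s1 s2 := by
    rw [Finset.disjoint_left]
    intro x hx1 hx2
    rw [hs1, Finset.mem_image] at hx1
    rw [hs2, Finset.mem_image] at hx2
    obtain ⟨j, hj, hje⟩ := hx1
    obtain ⟨k, hk, hke⟩ := hx2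
    exact hdis j hj k hk (by rw [hje, hke])
  have hu : s1 ∪ s2 = Finset.Ico 1 (aval μ m i + 1) := by
    apply Finset.eq_of_subset_of_card_le
    · apply Finset.union_subset
      · intro x hx
        rw [hs1, Finset.mem_image] at hx
        obtain ⟨j, hj, hje⟩ := hx
        exact hje ▸ hsub1 j hj
      · intro x hx
        rw [hs2, Finset.mem_image] at hx
        obtain ⟨k, hk, hke⟩ := hx
        exact hke ▸ hsub2 k hk
    · rw [Finset.card_union_of_disjoint hd, hs1, hs2,
        Finset.card_image_of_injOn inj1, Finset.card_image_of_injOn inj2,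
        Finset.card_range, Nat.card_Ico, Nat.card_Ico]
      simp only [aval]
      omega
  calc (∏ j ∈ Finset.range (μ.rowLen i), hookLength μ i j)
      * (∏ k ∈ Finset.Ico (i + 1) m, (aval μ m i - aval μ m k))
      = (∏ x ∈ s1, x) * (∏ x ∈ s2, x) := by
        rw [hs1, hs2, Finset.prod_image inj1, Finset.prod_image inj2]
    _ = ∏ x ∈ s1 ∪ s2, x := (Finset.prod_union hd).symm
    _ = ∏ x ∈ Finset.Ico 1 (aval μ m i + 1), x := by rw [hu]
    _ = Nat.factorial (aval μ m i) := Finset.prod_Ico_id_eq_factorial _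

theorem row_num_nat (q : ℕ) (hq : 1 ≤ q) (r : ℕ) :
    Nat.factorial (q - 1) * (∏ j ∈ Finset.range r, (q + j)) = Nat.factorial (q - 1 + r) := by
  induction r with
  | zero => simp
  | succ r ihr =>
    rw [Finset.prod_range_succ, ← mul_assoc, ihr]
    have h1 : q - 1 + (r + 1) = (q - 1 + r) + 1 := by omega
    rw [h1, Nat.factorial_succ]
    have h2 : q - 1 + r + 1 = q + r := by omega
    rw [h2]
    ring

theorem row_num (μ : YoungDiagram) (m : ℕ) {i : ℕ} (him : i < m) :
    (∏ j ∈ Finset.range (μ.rowLen i), ((m : ℚ) + (j : ℚ) - (i : ℚ)))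
      = (Nat.factorial (aval μ m i) : ℚ) / (Nat.factorial (m - 1 - i) : ℚ) := by
  have hq : 1 ≤ m - i := by omega
  have hnat := row_num_nat (m - i) hq (μ.rowLen i)
  have h1 : m - i - 1 = m - 1 - i := by omega
  have h2 : m - 1 - i + μ.rowLen i = aval μ m i := by simp only [aval]; omega
  rw [h1] at hnat
  rw [h2] at hnat
  have hcast : (∏ j ∈ Finset.range (μ.rowLen i), ((m : ℚ) + (j : ℚ) - (i : ℚ)))
      = ((∏ j ∈ Finset.range (μ.rowLen i), (m - i + j) : ℕ) : ℚ) := by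
    rw [Nat.cast_prod]
    apply Finset.prod_congr rfl
    intro j _
    have : ((m - i + j : ℕ) : ℚ) = (m : ℚ) - (i : ℚ) + (j : ℚ) := by
      push_cast [Nat.cast_sub (le_of_lt him)]
      ring
    rw [this]
    ring
  rw [hcast]
  rw [eq_div_iff (by exact_mod_cast (Nat.factorial_pos _).ne'), ← Nat.cast_mul]
  rw [mul_comm] at hnat
  exact_mod_cast hnat

end HookContent


/-- The Schur function specialization `s_λ(1^m)`, i.e. the number of semistandard Young
tableaux of shape `λ` with entries among `{0, …, m−1}`, equals
`∏_{r ∈ λ} (m + cont(r)) / h(r)`. -/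
theorem stmt_14 (μ : YoungDiagram) (m : ℕ) (hm : 1 ≤ m) :
    (Nat.card {T : SemistandardYoungTableau μ // ∀ i j : ℕ, (i, j) ∈ μ → T i j < m} : ℚ)
      = ∏ c ∈ μ.cells, (((m : ℚ) + (c.2 : ℚ) - (c.1 : ℚ)) / (hookLength μ c.1 c.2 : ℚ)) := by
  classical
  open HookContent in
  by_cases hcol : μ.colLen 0 ≤ m
  · rw [HookContent.key m μ hcol]
    -- decompose cells into rows
    have hcells : μ.cells = (Finset.range m).biUnion
        (fun i => {i} ×ˢ Finset.range (μ.rowLen i)) := by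
      ext ⟨i, j⟩
      simp only [Finset.mem_biUnion, Finset.mem_range, Finset.mem_product, Finset.mem_singleton,
        YoungDiagram.mem_cells]
      constructor
      · intro h
        have h1 : i < μ.colLen j := YoungDiagram.mem_iff_lt_colLen.mp h
        have h2 : μ.colLen j ≤ μ.colLen 0 := μ.colLen_anti 0 j (Nat.zero_le j)
        exact ⟨i, by omega, rfl, YoungDiagram.mem_iff_lt_rowLen.mp h⟩
      · rintro ⟨i', _, rfl, hj⟩
        exact YoungDiagram.mem_iff_lt_rowLen.mpr hj
    rw [hcells, Finset.prod_biUnion (by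
      intro x _ y _ hxy
      simp only [Function.onFun]
      rw [Finset.disjoint_left]
      rintro ⟨a, b⟩ hca hcb
      rw [Finset.mem_product, Finset.mem_singleton] at hca hcb
      exact hxy (hca.1 ▸ hcb.1 ▸ rfl))]
    have hrowsplit : ∀ i ∈ Finset.range m,
        (∏ c ∈ (({i} : Finset ℕ) ×ˢ Finset.range (μ.rowLen i)),
          (((m : ℚ) + (c.2 : ℚ) - (c.1 : ℚ)) / (hookLength μ c.1 c.2 : ℚ)))
        = ∏ j ∈ Finset.range (μ.rowLen i),
            (((m : ℚ) + (j : ℚ) - (i : ℚ)) / (hookLength μ i j : ℚ)) := by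
      intro i _
      rw [Finset.prod_product, Finset.prod_singleton]
    rw [Finset.prod_congr rfl hrowsplit]
    have hrow : ∀ i ∈ Finset.range m,
        (∏ j ∈ Finset.range (μ.rowLen i),
            (((m : ℚ) + (j : ℚ) - (i : ℚ)) / (hookLength μ i j : ℚ)))
        = (∏ k ∈ Finset.Ico (i + 1) m, ((HookContent.aval μ m i - HookContent.aval μ m k : ℕ) : ℚ))
            / (Nat.factorial (m - 1 - i) : ℚ) := by
      intro i hi
      rw [Finset.mem_range] at hi
      rw [Finset.prod_div_distrib, HookContent.row_num μ m hi]
      have hcast : ((Nat.factorial (HookContent.aval μ m i) : ℚ))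
          = (∏ j ∈ Finset.range (μ.rowLen i), (hookLength μ i j : ℚ))
            * (∏ k ∈ Finset.Ico (i + 1) m,
                ((HookContent.aval μ m i - HookContent.aval μ m k : ℕ) : ℚ)) := by
        rw [← Nat.cast_prod, ← Nat.cast_prod, ← Nat.cast_mul]
        exact_mod_cast (HookContent.hook_row μ m hcol hi).symm
      have hH : (∏ j ∈ Finset.range (μ.rowLen i), (hookLength μ i j : ℚ)) ≠ 0 := by
        apply Finset.prod_ne_zero_iff.mpr
        intro j hj
        rw [Finset.mem_range] at hj
        have h1 : (i, j) ∈ μ := YoungDiagram.mem_iff_lt_rowLen.mpr hj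
        have h2 : i < μ.colLen j := YoungDiagram.mem_iff_lt_colLen.mp h1
        have h3 : 1 ≤ hookLength μ i j := by
          simp only [hookLength]
          omega
        exact_mod_cast Nat.one_le_iff_ne_zero.mp h3
      have hF : ((Nat.factorial (m - 1 - i) : ℚ)) ≠ 0 := by
        exact_mod_cast (Nat.factorial_pos _).ne'
      rw [hcast]
      field_simp
    rw [Finset.prod_congr rfl hrow, Finset.prod_div_distrib]
    congr 1
    · -- numerators
      rw [← Fin.prod_univ_eq_prod_range (fun i =>
        ∏ k ∈ Finset.Ico (i + 1) m, ((HookContent.aval μ m i - HookContent.aval μ m k : ℕ) : ℚ)) m]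
      apply Finset.prod_congr rfl
      intro i _
      have h1 : ∀ j ∈ Finset.Ioi i, ((HookContent.aval μ m (i : ℕ) : ℚ)
          - (HookContent.aval μ m (j : ℕ) : ℚ))
          = ((HookContent.aval μ m (i : ℕ) - HookContent.aval μ m (j : ℕ) : ℕ) : ℚ) := by
        intro j hj
        rw [Finset.mem_Ioi] at hj
        have h2 : μ.rowLen (j : ℕ) ≤ μ.rowLen (i : ℕ) := μ.rowLen_anti _ _ (le_of_lt hj)
        have h3 : HookContent.aval μ m (j : ℕ) ≤ HookContent.aval μ m (i : ℕ) := by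
          simp only [HookContent.aval]
          have := j.isLt
          have : (i : ℕ) < (j : ℕ) := hj
          omega
        rw [Nat.cast_sub h3]
      rw [Finset.prod_congr rfl h1]
      rw [show (Finset.Ico ((i : ℕ) + 1) m) = Finset.Ioo (i : ℕ) m from by
        ext x
        rw [Finset.mem_Ico, Finset.mem_Ioo]
        omega]
      rw [show Finset.Ioo (i : ℕ) m = (Finset.Ioi i).map Fin.valEmbedding from
        (Fin.map_valEmbedding_Ioi i).symm]
      rw [Finset.prod_map]
      rfl
    · -- denominators
      rw [Fin.prod_univ_eq_prod_range (fun i => ((Nat.factorial i : ℚ))) m]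
      exact (Finset.prod_range_reflect (fun z => ((Nat.factorial z : ℚ))) m).symm
  · push_neg at hcol
    rw [HookContent.card_eq_zero_of_colLen_gt μ m hcol]
    have hmem : (m, 0) ∈ μ.cells :=
      (YoungDiagram.mem_cells _).mpr (YoungDiagram.mem_iff_lt_colLen.mpr hcol)
    rw [eq_comm]
    rw [Nat.cast_zero]
    apply Finset.prod_eq_zero hmem
    norm_num
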